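/- Let L be the closure in ℓ²(π) of the operator L̃ defined on finitely supported sequences by (L̃u)_n = λ_n·u_{n+1} + μ_n·u_{n−1}·1_{n≥2} − (λ_n+μ_n)·u_n. Then for every f ∈ ℓ²(π) and every ρ > 0 the equation (ρ − L)y = f has a unique solution y in the domain of L; this solution satisfies ‖y‖_π ≤ ρ^{−1}·‖f‖_π, and if f is real-valued and nonnegative entrywise then y is nonnegative entrywise. -/

import Mathlib

open Filter MeasureTheory

noncomputable section

/-- Birth rate `λ_n = n · λ̃(n/K)`. -/
def lamK (lam : ℝ → ℝ) (K : ℝ) (n : ℕ) : ℝ := (n : ℝ) * lam ((n : ℝ) / K)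

/-- Death rate `μ_n = n · μ̃(n/K)`. -/
def muK (mu : ℝ → ℝ) (K : ℝ) (n : ℕ) : ℝ := (n : ℝ) * mu ((n : ℝ) / K)

/-- The weights `π_n = (λ₁⋯λ_{n-1})/(μ₁⋯μ_n)` (so `π₁ = 1/μ₁`). -/
def pik (lam mu : ℝ → ℝ) (K : ℝ) (n : ℕ) : ℝ :=
  (∏ j ∈ Finset.Icc 1 (n - 1), lamK lam K j) / (∏ j ∈ Finset.Icc 1 n, muK mu K j)

/-- `H(x) = ∫_{x*}^x log (μ̃(s)/λ̃(s)) ds`. -/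
def Hfun (lam mu : ℝ → ℝ) (xs : ℝ) (x : ℝ) : ℝ :=
  ∫ s in xs..x, Real.log (mu s / lam s)

/-- `u⁰_n = 1 + ∑_{j=1}^{n-1} 1/(λ_j π_j)`. -/
def u0 (lam mu : ℝ → ℝ) (K : ℝ) (n : ℕ) : ℝ :=
  1 + ∑ j ∈ Finset.Icc 1 (n - 1), 1 / (lamK lam K j * pik lam mu K j)

/-- Standing assumptions on the rate functions. -/
structure SA (lam mu : ℝ → ℝ) (xs : ℝ) : Prop where
  lam_pos : ∀ x : ℝ, 0 ≤ x → 0 < lam x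
  mu_pos : ∀ x : ℝ, 0 ≤ x → 0 < mu x
  lam_diff : DifferentiableOn ℝ lam (Set.Ici (0 : ℝ))
  mu_diff : DifferentiableOn ℝ mu (Set.Ici (0 : ℝ))
  lam_mono : MonotoneOn lam (Set.Ici (0 : ℝ))
  mu_mono : MonotoneOn mu (Set.Ici (0 : ℝ))
  ratio_lim : Tendsto (fun x : ℝ => lam x / mu x) atTop (nhds 0)
  mu0_pos : 0 < mu 0
  mu0_lt_lam0 : mu 0 < lam 0
  xs_pos : 0 < xs
  lam_eq_mu_xs : lam xs = mu xs
  xs_unique : ∀ x : ℝ, 0 < x → lam x = mu x → x = xs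
  derivs_ne : deriv lam xs ≠ deriv mu xs
  int_fin : IntegrableOn (fun x : ℝ => 1 / (x * mu x)) (Set.Ici (xs / 2))
  mu_logderiv_bdd : ∃ M : ℝ, ∀ x : ℝ, 0 ≤ x → deriv mu x / mu x ≤ M
  logratio_mono : MonotoneOn (fun x : ℝ => Real.log (mu x / lam x)) (Set.Ici (0 : ℝ))
  H_d1 : ∀ x : ℝ, 0 ≤ x → DifferentiableAt ℝ (Hfun lam mu xs) x
  H_d2 : ∀ x : ℝ, 0 ≤ x → DifferentiableAt ℝ (deriv (Hfun lam mu xs)) x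
  H_d3 : ∀ x : ℝ, 0 ≤ x → DifferentiableAt ℝ (deriv (deriv (Hfun lam mu xs))) x
  H3_bdd : ∃ M : ℝ, ∀ x : ℝ, 0 ≤ x →
    (1 + x ^ 2) * |deriv (deriv (deriv (Hfun lam mu xs))) x| ≤ M


/-- Finitely supported sequences (the domain `𝒟` of the operator `L̃`). -/
def FinSupp (u : ℕ → ℂ) : Prop := ∃ N : ℕ, ∀ n : ℕ, N < n → u n = 0

/-- Membership in the weighted space `ℓ²(π)` (indices `n ≥ 1`). -/
def MemL2pi (lam mu : ℝ → ℝ) (K : ℝ) (u : ℕ → ℂ) : Prop :=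
  Summable (fun n : ℕ => pik lam mu K (n + 1) * ‖u (n + 1)‖ ^ 2)

/-- The inner product `⟨u,v⟩_π = ∑_{n≥1} π_n conj(u_n) v_n`. -/
def ippi (lam mu : ℝ → ℝ) (K : ℝ) (u v : ℕ → ℂ) : ℂ :=
  ∑' n : ℕ, (pik lam mu K (n + 1) : ℂ) * (starRingEnd ℂ) (u (n + 1)) * v (n + 1)

/-- The norm `‖u‖_π`. -/
def normpi (lam mu : ℝ → ℝ) (K : ℝ) (u : ℕ → ℂ) : ℝ :=
  Real.sqrt (∑' n : ℕ, pik lam mu K (n + 1) * ‖u (n + 1)‖ ^ 2)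

/-- The operator `L̃`: `(L̃u)_n = λ_n u_{n+1} + μ_n u_{n-1} 1_{n≥2} - (λ_n+μ_n) u_n`. -/
def Ltilde (lam mu : ℝ → ℝ) (K : ℝ) (u : ℕ → ℂ) (n : ℕ) : ℂ :=
  (lamK lam K n : ℂ) * u (n + 1)
    + (if 2 ≤ n then (muK mu K n : ℂ) * u (n - 1) else 0)
    - ((lamK lam K n : ℂ) + (muK mu K n : ℂ)) * u n

/-- The graph of the closure `L` of `L̃` in `ℓ²(π)`: `(u, w)` belongs to the graph iff
there are finitely supported sequences converging to `u` in `ℓ²(π)` whose images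
under `L̃` converge to `w` in `ℓ²(π)`. -/
def LGraph (lam mu : ℝ → ℝ) (K : ℝ) (u w : ℕ → ℂ) : Prop :=
  MemL2pi lam mu K u ∧ MemL2pi lam mu K w ∧
    ∃ us : ℕ → ℕ → ℂ, (∀ k, FinSupp (us k)) ∧
      Tendsto (fun k => normpi lam mu K (fun n => us k n - u n)) atTop (nhds 0) ∧
      Tendsto (fun k => normpi lam mu K (fun n => Ltilde lam mu K (us k) n - w n))
        atTop (nhds 0)

section Aux
open ComplexConjugate

theorem normsq_eq (z : ℂ) : ‖z‖^2 = z.re^2 + z.im^2 := by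
  rw [← Complex.normSq_eq_norm_sq, Complex.normSq_apply]; ring

theorem re_conj_self (z : ℂ) : ((starRingEnd ℂ) z * z).re = ‖z‖^2 := by
  simp only [Complex.mul_re, Complex.conj_re, Complex.conj_im, normsq_eq]; ring

theorem re_conj_comm (a b : ℂ) : ((starRingEnd ℂ) a * b).re = ((starRingEnd ℂ) b * a).re := by
  simp only [Complex.mul_re, Complex.conj_re, Complex.conj_im]; ring

theorem normsub_eq (a b : ℂ) : ‖a - b‖^2 = ‖a‖^2 + ‖b‖^2 - 2 * ((starRingEnd ℂ) a * b).re := by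
  simp only [Complex.mul_re, Complex.conj_re, Complex.conj_im, normsq_eq, Complex.sub_re,
    Complex.sub_im]; ring

variable {lam mu : ℝ → ℝ} {K : ℝ}

structure Pos (lam mu : ℝ → ℝ) (K : ℝ) : Prop where
  lpos : ∀ n : ℕ, 1 ≤ n → 0 < lamK lam K n
  mpos : ∀ n : ℕ, 1 ≤ n → 0 < muK mu K n
  ppos : ∀ n : ℕ, 0 < pik lam mu K n
  db : ∀ n : ℕ, 1 ≤ n → pik lam mu K (n+1) * muK mu K (n+1) = pik lam mu K n * lamK lam K n

theorem pos_of (hK : 1 < K)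
    (hl : ∀ x : ℝ, 0 ≤ x → 0 < lam x) (hm : ∀ x : ℝ, 0 ≤ x → 0 < mu x) :
    Pos lam mu K := by
  have hK0 : (0:ℝ) < K := lt_trans one_pos hK
  have hlp : ∀ n : ℕ, 1 ≤ n → 0 < lamK lam K n := by
    intro n hn
    have hn0 : (0:ℝ) < (n:ℝ) := by exact_mod_cast hn
    exact mul_pos hn0 (hl _ (div_nonneg hn0.le hK0.le))
  have hmp : ∀ n : ℕ, 1 ≤ n → 0 < muK mu K n := by
    intro n hn
    have hn0 : (0:ℝ) < (n:ℝ) := by exact_mod_cast hn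
    exact mul_pos hn0 (hm _ (div_nonneg hn0.le hK0.le))
  have hpp : ∀ n : ℕ, 0 < pik lam mu K n := by
    intro n
    apply div_pos
    · exact Finset.prod_pos (fun j hj => hlp j (Finset.mem_Icc.mp hj).1)
    · exact Finset.prod_pos (fun j hj => hmp j (Finset.mem_Icc.mp hj).1)
  refine ⟨hlp, hmp, hpp, ?_⟩
  intro n hn
  obtain ⟨m, rfl⟩ := Nat.exists_eq_add_of_le hn
  have e1 : pik lam mu K (1 + m + 1)
      = ((∏ j ∈ Finset.Icc 1 (m+1-1), lamK lam K j) * lamK lam K (m+1))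
        / ((∏ j ∈ Finset.Icc 1 (1+m), muK mu K j) * muK mu K (1+m+1)) := by
    unfold pik
    rw [show 1 + m + 1 - 1 = m + 1 by omega,
      Finset.prod_Icc_succ_top (by omega : 1 ≤ m + 1) (lamK lam K),
      show 1 + m + 1 = (1 + m) + 1 from rfl,
      Finset.prod_Icc_succ_top (by omega : 1 ≤ 1 + m + 1) (muK mu K)]
    rw [show m + 1 - 1 = m from rfl]
  have e2 : pik lam mu K (1 + m)
      = (∏ j ∈ Finset.Icc 1 (m+1-1), lamK lam K j) / (∏ j ∈ Finset.Icc 1 (1+m), muK mu K j) := by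
    unfold pik
    rw [show 1 + m - 1 = m + 1 - 1 by omega]
  rw [e1, e2]
  have hmne : muK mu K (1+m+1) ≠ 0 := (hmp _ (by omega)).ne'
  have hQ : (∏ j ∈ Finset.Icc 1 (1+m), muK mu K j) ≠ 0 :=
    (Finset.prod_pos (fun j hj => hmp j (Finset.mem_Icc.mp hj).1)).ne'
  have : lamK lam K (1 + m) = lamK lam K (m + 1) := by rw [add_comm]
  rw [this]
  field_simp

end Aux
section Aux2
variable {lam mu : ℝ → ℝ} {K : ℝ}

theorem maxprin (hP : Pos lam mu K)
    (hpimu : Tendsto (fun n : ℕ => pik lam mu K n * muK mu K n ^ 2) atTop (nhds 0))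
    (ρ : ℝ) (hρ : 0 < ρ) (r : ℕ → ℝ) (hr0 : r 0 = 0)
    (hsum : Summable (fun n : ℕ => pik lam mu K (n+1) * (r (n+1))^2))
    (hrec : ∀ n : ℕ, 1 ≤ n →
      lamK lam K n * (r (n+1) - r n) ≤ ρ * r n + muK mu K n * (r n - r (n-1))) :
    ∀ n : ℕ, 0 ≤ r n := by
  by_contra hcon
  push_neg at hcon
  obtain ⟨n₀, hn₀⟩ := hcon
  classical
  have hex : ∃ n, r n < 0 := ⟨n₀, hn₀⟩
  set m := Nat.find hex with hm
  have hrm : r m < 0 := Nat.find_spec hex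
  have hmin : ∀ k, k < m → 0 ≤ r k := fun k hk => le_of_not_gt (Nat.find_min hex hk)
  have hm1 : 1 ≤ m := by
    rcases Nat.eq_zero_or_pos m with h | h
    · rw [h, hr0] at hrm; linarith
    · exact h
  have hrm1 : 0 ≤ r (m-1) := hmin _ (by omega)
  set c : ℝ := ρ * pik lam mu K m * r m with hc
  have hcneg : c < 0 := mul_neg_of_pos_of_neg (mul_pos hρ (hP.ppos m)) hrm
  have key : ∀ j : ℕ, r (m+j) ≤ r m ∧
      pik lam mu K (m+j) * lamK lam K (m+j) * (r (m+j+1) - r (m+j)) ≤ c := by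
    intro j
    induction j with
    | zero =>
      constructor
      · simp
      · have h1 := hrec m hm1
        have h2 : muK mu K m * (r m - r (m-1)) ≤ 0 :=
          mul_nonpos_of_nonneg_of_nonpos (hP.mpos m hm1).le (by linarith)
        have h3 : lamK lam K m * (r (m+1) - r m) ≤ ρ * r m := by linarith
        have hp := hP.ppos m
        calc pik lam mu K m * lamK lam K m * (r (m+1) - r m)
            = pik lam mu K m * (lamK lam K m * (r (m+1) - r m)) := by ring
          _ ≤ pik lam mu K m * (ρ * r m) := by
              exact mul_le_mul_of_nonneg_left h3 hp.le
          _ = c := by rw [hc]; ring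
    | succ j ih =>
      obtain ⟨ih1, ih2⟩ := ih
      have hplpos : 0 < pik lam mu K (m+j) * lamK lam K (m+j) :=
        mul_pos (hP.ppos _) (hP.lpos _ (by omega))
      have hstep : r (m+j+1) ≤ r (m+j) + c / (pik lam mu K (m+j) * lamK lam K (m+j)) := by
        rw [← sub_le_iff_le_add']
        rw [le_div_iff₀ hplpos]
        nlinarith [ih2]
      have hcdiv : c / (pik lam mu K (m+j) * lamK lam K (m+j)) < 0 :=
        div_neg_of_neg_of_pos hcneg hplpos
      have h1 : r (m+(j+1)) ≤ r m := by
        have : r (m+j+1) ≤ r (m+j) := by linarith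
        calc r (m+(j+1)) = r (m+j+1) := by ring_nf
          _ ≤ r (m+j) := this
          _ ≤ r m := ih1
      refine ⟨h1, ?_⟩
      have hrec' := hrec (m+j+1) (by omega)
      have hdb := hP.db (m+j) (by omega)
      have hpp := hP.ppos (m+j+1)
      have heq : pik lam mu K (m+j+1) * muK mu K (m+j+1) * (r (m+j+1) - r (m+j))
          = pik lam mu K (m+j) * lamK lam K (m+j) * (r (m+j+1) - r (m+j)) := by
        rw [hdb]
      have hr1 : r (m+j+1) ≤ r m := by
        have e : m + (j+1) = m + j + 1 := by omega
        rw [e] at h1; exact h1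
      have hterm : ρ * pik lam mu K (m+j+1) * r (m+j+1) ≤ 0 :=
        mul_nonpos_of_nonneg_of_nonpos (mul_pos hρ hpp).le (by linarith)
      have hmul : pik lam mu K (m+j+1) * (lamK lam K (m+j+1) * (r (m+j+1+1) - r (m+j+1)))
          ≤ pik lam mu K (m+j+1) * (ρ * r (m+j+1) + muK mu K (m+j+1) * (r (m+j+1) - r (m+j+1-1))) := by
        exact mul_le_mul_of_nonneg_left (by simpa using hrec' ) hpp.le
      have hidx : m + j + 1 - 1 = m + j := by omega
      rw [hidx] at hmul
      have : pik lam mu K (m+(j+1)) * lamK lam K (m+(j+1)) * (r (m+(j+1)+1) - r (m+(j+1)))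
          ≤ ρ * pik lam mu K (m+j+1) * r (m+j+1)
            + pik lam mu K (m+j) * lamK lam K (m+j) * (r (m+j+1) - r (m+j)) := by
        have e : m + (j+1) = m + j + 1 := by ring
        rw [e]
        calc pik lam mu K (m+j+1) * lamK lam K (m+j+1) * (r (m+j+1+1) - r (m+j+1))
            = pik lam mu K (m+j+1) * (lamK lam K (m+j+1) * (r (m+j+1+1) - r (m+j+1))) := by ring
          _ ≤ pik lam mu K (m+j+1) * (ρ * r (m+j+1) + muK mu K (m+j+1) * (r (m+j+1) - r (m+j))) := hmul
          _ = ρ * pik lam mu K (m+j+1) * r (m+j+1)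
              + pik lam mu K (m+j+1) * muK mu K (m+j+1) * (r (m+j+1) - r (m+j)) := by ring
          _ = ρ * pik lam mu K (m+j+1) * r (m+j+1)
              + pik lam mu K (m+j) * lamK lam K (m+j) * (r (m+j+1) - r (m+j)) := by rw [heq]
      linarith
  have hbound : ∀ j : ℕ,
      c^2 ≤ (pik lam mu K (m+j+1) * r (m+j+1)^2) * (pik lam mu K (m+j+1) * muK mu K (m+j+1)^2) := by
    intro j
    obtain ⟨h1, h2⟩ := key j
    have hplpos : 0 < pik lam mu K (m+j) * lamK lam K (m+j) :=
      mul_pos (hP.ppos _) (hP.lpos _ (by omega))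
    have hstep : r (m+j+1) ≤ c / (pik lam mu K (m+j) * lamK lam K (m+j)) := by
      have : r (m+j+1) - r (m+j) ≤ c / (pik lam mu K (m+j) * lamK lam K (m+j)) := by
        rw [le_div_iff₀ hplpos]; nlinarith [h2]
      linarith [h1, hrm, this]
    have hdb := hP.db (m+j) (by omega)
    have hmmpos : 0 < pik lam mu K (m+j+1) * muK mu K (m+j+1) :=
      mul_pos (hP.ppos _) (hP.mpos _ (by omega))
    rw [← hdb] at hstep
    have h3 : pik lam mu K (m+j+1) * muK mu K (m+j+1) * r (m+j+1) ≤ c := by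
      calc pik lam mu K (m+j+1) * muK mu K (m+j+1) * r (m+j+1)
          ≤ pik lam mu K (m+j+1) * muK mu K (m+j+1) * (c / (pik lam mu K (m+j+1) * muK mu K (m+j+1))) :=
            mul_le_mul_of_nonneg_left hstep hmmpos.le
        _ = c := by rw [mul_div_assoc', mul_div_cancel_left₀ c hmmpos.ne']
    have h4 : c^2 ≤ (pik lam mu K (m+j+1) * muK mu K (m+j+1) * r (m+j+1))^2 := by
      nlinarith [h3, hcneg]
    calc c^2 ≤ (pik lam mu K (m+j+1) * muK mu K (m+j+1) * r (m+j+1))^2 := h4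
      _ = (pik lam mu K (m+j+1) * r (m+j+1)^2) * (pik lam mu K (m+j+1) * muK mu K (m+j+1)^2) := by ring
  have hA : Tendsto (fun j : ℕ => pik lam mu K (m+j+1) * r (m+j+1)^2) atTop (nhds 0) := by
    have := hsum.tendsto_atTop_zero
    have hcomp : Tendsto (fun j : ℕ => m + j) atTop atTop := by
      simpa [add_comm] using tendsto_add_atTop_nat m
    exact this.comp hcomp
  have hB : Tendsto (fun j : ℕ => pik lam mu K (m+j+1) * muK mu K (m+j+1)^2) atTop (nhds 0) := by
    have hcomp : Tendsto (fun j : ℕ => m + j + 1) atTop atTop := by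
      have : (fun j : ℕ => m + j + 1) = fun j : ℕ => j + (m+1) := by funext j; omega
      rw [this]; exact tendsto_add_atTop_nat (m+1)
    exact hpimu.comp hcomp
  have hAB : Tendsto (fun j : ℕ => (pik lam mu K (m+j+1) * r (m+j+1)^2) * (pik lam mu K (m+j+1) * muK mu K (m+j+1)^2)) atTop (nhds 0) := by
    simpa using hA.mul hB
  have : c^2 ≤ 0 := le_of_tendsto_of_tendsto tendsto_const_nhds hAB (Eventually.of_forall hbound)
  nlinarith [hcneg]

theorem Ltilde_one (u : ℕ → ℂ) : Ltilde lam mu K u 1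
    = (lamK lam K 1 : ℂ) * u 2 - ((lamK lam K 1 : ℂ) + (muK mu K 1 : ℂ)) * u 1 := by
  unfold Ltilde; rw [if_neg (by omega)]; ring

theorem Ltilde_succ (u : ℕ → ℂ) (n : ℕ) : Ltilde lam mu K u (n+2)
    = (lamK lam K (n+2) : ℂ) * u (n+3) + (muK mu K (n+2) : ℂ) * u (n+1)
      - ((lamK lam K (n+2) : ℂ) + (muK mu K (n+2) : ℂ)) * u (n+2) := by
  unfold Ltilde; rw [if_pos (by omega)]; rfl

theorem dirichlet (hP : Pos lam mu K) (u : ℕ → ℂ) (M : ℕ) :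
    ∑ n ∈ Finset.range (M+1),
        pik lam mu K (n+1) * ((starRingEnd ℂ) (u (n+1)) * Ltilde lam mu K u (n+1)).re
      = -(pik lam mu K 1 * muK mu K 1 * ‖u 1‖^2)
        - (∑ n ∈ Finset.range M,
            pik lam mu K (n+1) * lamK lam K (n+1) * ‖u (n+2) - u (n+1)‖^2)
        + pik lam mu K (M+1) * lamK lam K (M+1)
            * (((starRingEnd ℂ) (u (M+1)) * u (M+2)).re - ‖u (M+1)‖^2) := by
  induction M with
  | zero =>
    rw [Finset.sum_range_one, Finset.range_zero, Finset.sum_empty]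
    rw [show (0+1) = 1 from rfl, Ltilde_one]
    simp only [Complex.mul_re, Complex.add_re, Complex.add_im, Complex.sub_re, Complex.sub_im,
      Complex.mul_im, Complex.ofReal_re, Complex.ofReal_im, Complex.conj_re, Complex.conj_im,
      Complex.zero_re, Complex.zero_im, normsq_eq]
    ring
  | succ M ih =>
    rw [Finset.sum_range_succ, ih, Finset.sum_range_succ]
    have hdb := hP.db (M+1) (by omega)
    rw [show M+1+1 = M+2 from rfl, Ltilde_succ]
    rw [show M+3 = M+2+1 from rfl]
    simp only [Complex.mul_re, Complex.add_re, Complex.add_im, Complex.sub_re, Complex.sub_im,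
      Complex.mul_im, Complex.ofReal_re, Complex.ofReal_im, Complex.conj_re, Complex.conj_im,
      normsq_eq]
    linear_combination hdb * ((u (M+2)).re * (u (M+1)).re + (u (M+2)).im * (u (M+1)).im
      - (u (M+2)).re^2 - (u (M+2)).im^2)

theorem wronsk (hP : Pos lam mu K) (u g : ℕ → ℂ) (M : ℕ) :
    ∑ n ∈ Finset.range (M+1),
        (pik lam mu K (n+1) : ℂ) * (Ltilde lam mu K u (n+1) * g (n+1) - u (n+1) * Ltilde lam mu K g (n+1))
      = ((pik lam mu K (M+1) * lamK lam K (M+1) : ℝ) : ℂ)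
          * (u (M+2) * g (M+1) - u (M+1) * g (M+2)) := by
  induction M with
  | zero =>
    rw [Finset.sum_range_one]
    rw [show (0+1) = 1 from rfl, Ltilde_one, Ltilde_one]
    push_cast
    ring
  | succ M ih =>
    rw [Finset.sum_range_succ, ih]
    have hdb := hP.db (M+1) (by omega)
    have hdbC : ((pik lam mu K (M+1+1) * muK mu K (M+1+1) : ℝ) : ℂ)
        = ((pik lam mu K (M+1) * lamK lam K (M+1) : ℝ) : ℂ) := by exact_mod_cast hdb
    rw [show M+1+1 = M+2 from rfl] at hdbC ⊢
    rw [Ltilde_succ, Ltilde_succ]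
    rw [show M+3 = M+2+1 from rfl]
    push_cast at hdbC ⊢
    linear_combination hdbC * (u (M+1) * g (M+2) - u (M+2) * g (M+1))

end Aux2
section Aux3
variable {lam mu : ℝ → ℝ} {K : ℝ}

/-- conjugated coordinates -/
def Jf (lam mu : ℝ → ℝ) (K : ℝ) (u : ℕ → ℂ) : ℕ → ℂ :=
  fun n => ((Real.sqrt (pik lam mu K (n+1)) : ℝ) : ℂ) * u (n+1)

def Spi (lam mu : ℝ → ℝ) (K : ℝ) (u : ℕ → ℂ) : ℝ :=
  ∑' n : ℕ, pik lam mu K (n+1) * ‖u (n+1)‖^2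

theorem normpi_def' (u : ℕ → ℂ) : normpi lam mu K u = Real.sqrt (Spi lam mu K u) := rfl

theorem Spi_nonneg (hP : Pos lam mu K) (u : ℕ → ℂ) : 0 ≤ Spi lam mu K u :=
  tsum_nonneg (fun n => mul_nonneg (hP.ppos _).le (sq_nonneg _))

theorem normpi_nonneg (u : ℕ → ℂ) : 0 ≤ normpi lam mu K u := Real.sqrt_nonneg _

theorem Jf_norm_sq (hP : Pos lam mu K) (u : ℕ → ℂ) (n : ℕ) :
    ‖Jf lam mu K u n‖^2 = pik lam mu K (n+1) * ‖u (n+1)‖^2 := by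
  unfold Jf
  rw [norm_mul, mul_pow, Complex.norm_real, Real.norm_eq_abs,
    abs_of_nonneg (Real.sqrt_nonneg _), Real.sq_sqrt (hP.ppos _).le]

theorem memℓp_iff (hP : Pos lam mu K) (u : ℕ → ℂ) :
    MemL2pi lam mu K u ↔ Memℓp (Jf lam mu K u) 2 := by
  rw [memℓp_gen_iff (by norm_num : 0 < (2 : ENNReal).toReal)]
  unfold MemL2pi
  constructor
  · intro h
    apply Summable.congr h
    intro n
    rw [show ((2:ENNReal).toReal) = ((2:ℕ):ℝ) by norm_num, Real.rpow_natCast,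
      Jf_norm_sq hP]
  · intro h
    apply Summable.congr h
    intro n
    rw [show ((2:ENNReal).toReal) = ((2:ℕ):ℝ) by norm_num, Real.rpow_natCast,
      Jf_norm_sq hP]

def toLp (hP : Pos lam mu K) (u : ℕ → ℂ) (h : MemL2pi lam mu K u) :
    lp (fun _ : ℕ => ℂ) 2 := ⟨Jf lam mu K u, (memℓp_iff hP u).mp h⟩

theorem toLp_coe (hP : Pos lam mu K) (u : ℕ → ℂ) (h : MemL2pi lam mu K u) (n : ℕ) :
    (toLp hP u h : ℕ → ℂ) n = Jf lam mu K u n := rfl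

theorem normpi_eq (hP : Pos lam mu K) (u : ℕ → ℂ) (h : MemL2pi lam mu K u) :
    normpi lam mu K u = ‖toLp hP u h‖ := by
  rw [lp.norm_eq_tsum_rpow (by norm_num : 0 < (2:ENNReal).toReal), normpi_def']
  rw [show ((2:ENNReal).toReal) = ((2:ℕ):ℝ) by norm_num]
  have h1 : ∀ n : ℕ, ‖(toLp hP u h : ℕ → ℂ) n‖ ^ (((2:ℕ):ℝ)) = pik lam mu K (n+1) * ‖u (n+1)‖^2 := by
    intro n
    rw [Real.rpow_natCast, toLp_coe, Jf_norm_sq hP]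
  rw [tsum_congr h1]
  rw [Real.sqrt_eq_rpow]
  norm_num
  rfl

theorem ippi_eq (hP : Pos lam mu K) (u v : ℕ → ℂ) (hu : MemL2pi lam mu K u)
    (hv : MemL2pi lam mu K v) :
    ippi lam mu K u v = inner ℂ (toLp hP u hu) (toLp hP v hv) := by
  rw [lp.inner_eq_tsum]
  unfold ippi
  apply tsum_congr
  intro n
  rw [RCLike.inner_apply, toLp_coe, toLp_coe]
  unfold Jf
  rw [map_mul, Complex.conj_ofReal]
  have : ((Real.sqrt (pik lam mu K (n+1)) : ℝ) : ℂ) * ((Real.sqrt (pik lam mu K (n+1)) : ℝ) : ℂ)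
      = ((pik lam mu K (n+1) : ℝ) : ℂ) := by
    rw [← Complex.ofReal_mul, Real.mul_self_sqrt (hP.ppos _).le]
  rw [← this]
  ring

theorem memL2pi_of_finSupp (hP : Pos lam mu K) (u : ℕ → ℂ) (h : FinSupp u) :
    MemL2pi lam mu K u := by
  obtain ⟨N, hN⟩ := h
  apply summable_of_ne_finset_zero (s := Finset.range (N+1))
  intro n hn
  rw [Finset.mem_range, not_lt] at hn
  rw [hN (n+1) (by omega)]
  simp

theorem MemL2pi.sub {u v : ℕ → ℂ} (hP : Pos lam mu K) (hu : MemL2pi lam mu K u)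
    (hv : MemL2pi lam mu K v) : MemL2pi lam mu K (fun n => u n - v n) := by
  rw [memℓp_iff hP] at hu hv ⊢
  have : Jf lam mu K (fun n => u n - v n) = fun n => Jf lam mu K u n - Jf lam mu K v n := by
    funext n; unfold Jf; ring
  rw [this]
  exact hu.sub hv

theorem MemL2pi.conj {u : ℕ → ℂ} (hu : MemL2pi lam mu K u) :
    MemL2pi lam mu K (fun n => (starRingEnd ℂ) (u n)) := by
  apply Summable.congr hu
  intro n
  simp

theorem coord_le (hP : Pos lam mu K) (u : ℕ → ℂ) (h : MemL2pi lam mu K u) (n : ℕ) :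
    Real.sqrt (pik lam mu K (n+1)) * ‖u (n+1)‖ ≤ normpi lam mu K u := by
  rw [normpi_def']
  have h1 : pik lam mu K (n+1) * ‖u (n+1)‖^2 ≤ Spi lam mu K u :=
    Summable.le_tsum h n (fun m _ => mul_nonneg (hP.ppos _).le (sq_nonneg _))
  have h2 : (Real.sqrt (pik lam mu K (n+1)) * ‖u (n+1)‖)^2 = pik lam mu K (n+1) * ‖u (n+1)‖^2 := by
    rw [mul_pow, Real.sq_sqrt (hP.ppos _).le]
  rw [show Real.sqrt (pik lam mu K (n+1)) * ‖u (n+1)‖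
      = Real.sqrt ((Real.sqrt (pik lam mu K (n+1)) * ‖u (n+1)‖)^2) from
    (Real.sqrt_sq (mul_nonneg (Real.sqrt_nonneg _) (norm_nonneg _))).symm]
  exact Real.sqrt_le_sqrt (by rw [h2]; exact h1)

end Aux3
section Aux4
variable {lam mu : ℝ → ℝ} {K : ℝ}

def resolvOp (lam mu : ℝ → ℝ) (K : ℝ) (ρ : ℝ) (u : ℕ → ℂ) : ℕ → ℂ :=
  fun n => (ρ:ℂ) * u n - Ltilde lam mu K u n

theorem Ltilde_eq_zero (u : ℕ → ℂ) (N : ℕ) (hN : ∀ k, N < k → u k = 0)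
    (n : ℕ) (hn : N + 2 ≤ n) : Ltilde lam mu K u n = 0 := by
  unfold Ltilde
  rw [hN (n+1) (by omega), hN n (by omega), hN (n-1) (by omega)]
  split <;> simp

theorem finSupp_Ltilde (u : ℕ → ℂ) (h : FinSupp u) : FinSupp (Ltilde lam mu K u) := by
  obtain ⟨N, hN⟩ := h
  exact ⟨N+1, fun n hn => Ltilde_eq_zero u N hN n (by omega)⟩

theorem finSupp_resolv (ρ : ℝ) (u : ℕ → ℂ) (h : FinSupp u) :
    FinSupp (resolvOp lam mu K ρ u) := by
  obtain ⟨N, hN⟩ := h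
  refine ⟨N+1, fun n hn => ?_⟩
  unfold resolvOp
  rw [hN n (by omega), Ltilde_eq_zero u N hN n (by omega)]
  simp

theorem Ltilde_sub (u v : ℕ → ℂ) (n : ℕ) :
    Ltilde lam mu K (fun k => u k - v k) n = Ltilde lam mu K u n - Ltilde lam mu K v n := by
  unfold Ltilde
  split <;> ring

theorem Ltilde_conj (u : ℕ → ℂ) (n : ℕ) :
    Ltilde lam mu K (fun k => (starRingEnd ℂ) (u k)) n = (starRingEnd ℂ) (Ltilde lam mu K u n) := by
  unfold Ltilde
  split <;> simp [map_mul, map_sub, map_add, Complex.conj_ofReal] <;> ring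

/-- Dissipativity estimate for finitely supported `u`. -/
theorem diss (hP : Pos lam mu K) (ρ : ℝ) (hρ : 0 < ρ) (u : ℕ → ℂ) (h : FinSupp u) :
    normpi lam mu K u ≤ ρ⁻¹ * normpi lam mu K (resolvOp lam mu K ρ u) := by
  obtain ⟨N, hN⟩ := h
  have memu : MemL2pi lam mu K u := memL2pi_of_finSupp hP u ⟨N, hN⟩
  have memr : MemL2pi lam mu K (resolvOp lam mu K ρ u) :=
    memL2pi_of_finSupp hP _ (finSupp_resolv ρ u ⟨N, hN⟩)
  -- finite sum representation of Spi
  have hSpi : Spi lam mu K u = ∑ n ∈ Finset.range (N+1), pik lam mu K (n+1) * ‖u (n+1)‖^2 := by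
    apply tsum_eq_sum
    intro n hn
    rw [Finset.mem_range, not_lt] at hn
    rw [hN (n+1) (by omega)]
    simp
  -- finite sum representation of the inner product
  have hip : ippi lam mu K u (resolvOp lam mu K ρ u)
      = ∑ n ∈ Finset.range (N+1), (pik lam mu K (n+1) : ℂ) * (starRingEnd ℂ) (u (n+1))
          * resolvOp lam mu K ρ u (n+1) := by
    apply tsum_eq_sum
    intro n hn
    rw [Finset.mem_range, not_lt] at hn
    rw [hN (n+1) (by omega)]
    simp
  have hsplit : ippi lam mu K u (resolvOp lam mu K ρ u)
      = (ρ:ℂ) * ((Spi lam mu K u : ℝ) : ℂ)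
        - ∑ n ∈ Finset.range (N+1), (pik lam mu K (n+1) : ℂ)
            * ((starRingEnd ℂ) (u (n+1)) * Ltilde lam mu K u (n+1)) := by
    rw [hip, hSpi]
    unfold resolvOp
    rw [Finset.sum_congr rfl (fun n _ => by
      show (pik lam mu K (n+1) : ℂ) * (starRingEnd ℂ) (u (n+1)) * ((ρ:ℂ) * u (n+1) - Ltilde lam mu K u (n+1))
        = (ρ:ℂ) * ((pik lam mu K (n+1) * ‖u (n+1)‖^2 : ℝ) : ℂ)
          - (pik lam mu K (n+1) : ℂ) * ((starRingEnd ℂ) (u (n+1)) * Ltilde lam mu K u (n+1))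
      have hc : (starRingEnd ℂ) (u (n+1)) * u (n+1) = ((‖u (n+1)‖^2 : ℝ) : ℂ) := by
        simp [Complex.conj_mul']
      rw [mul_assoc ((pik lam mu K (n+1) : ℂ)) _ _]
      rw [mul_sub, mul_comm ((starRingEnd ℂ) (u (n+1))) ((ρ:ℂ) * u (n+1))]
      rw [mul_assoc ((ρ:ℂ)) (u (n+1)) _, mul_comm (u (n+1)) _, hc]
      push_cast
      ring)]
    rw [Finset.sum_sub_distrib]
    congr 1
    rw [← Finset.mul_sum]
    push_cast
    ring
  -- real part estimate via the Dirichlet form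
  have hdir : (∑ n ∈ Finset.range (N+1), (pik lam mu K (n+1) : ℂ)
      * ((starRingEnd ℂ) (u (n+1)) * Ltilde lam mu K u (n+1))).re ≤ 0 := by
    rw [Complex.re_sum]
    have : ∀ n ∈ Finset.range (N+1), ((pik lam mu K (n+1) : ℂ)
        * ((starRingEnd ℂ) (u (n+1)) * Ltilde lam mu K u (n+1))).re
        = pik lam mu K (n+1) * ((starRingEnd ℂ) (u (n+1)) * Ltilde lam mu K u (n+1)).re := by
      intro n _
      rw [Complex.re_ofReal_mul]
    rw [Finset.sum_congr rfl this, dirichlet hP u N]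
    have hb1 : u (N+1) = 0 := hN _ (by omega)
    rw [hb1]
    have hD : 0 ≤ ∑ n ∈ Finset.range N, pik lam mu K (n+1) * lamK lam K (n+1) * ‖u (n+2) - u (n+1)‖^2 :=
      Finset.sum_nonneg (fun n _ => mul_nonneg
        (mul_nonneg (hP.ppos _).le (hP.lpos _ (by omega)).le) (sq_nonneg _))
    have hb2 : 0 ≤ pik lam mu K 1 * muK mu K 1 * ‖u 1‖^2 :=
      mul_nonneg (mul_nonneg (hP.ppos _).le (hP.mpos _ (by omega)).le) (sq_nonneg _)
    simp only [map_zero, zero_mul, Complex.zero_re, norm_zero]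
    nlinarith
  have hre : ρ * Spi lam mu K u ≤ (ippi lam mu K u (resolvOp lam mu K ρ u)).re := by
    rw [hsplit, Complex.sub_re]
    have : ((ρ:ℂ) * ((Spi lam mu K u : ℝ) : ℂ)).re = ρ * Spi lam mu K u := by
      rw [← Complex.ofReal_mul]
      exact Complex.ofReal_re _
    rw [this]
    linarith
  -- Cauchy-Schwarz
  have hcs : (ippi lam mu K u (resolvOp lam mu K ρ u)).re
      ≤ normpi lam mu K u * normpi lam mu K (resolvOp lam mu K ρ u) := by
    calc (ippi lam mu K u (resolvOp lam mu K ρ u)).re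
        ≤ ‖ippi lam mu K u (resolvOp lam mu K ρ u)‖ := Complex.re_le_norm _
      _ = ‖(inner ℂ (toLp hP u memu) (toLp hP _ memr) : ℂ)‖ := by rw [ippi_eq hP _ _ memu memr]
      _ ≤ ‖toLp hP u memu‖ * ‖toLp hP _ memr‖ := norm_inner_le_norm _ _
      _ = normpi lam mu K u * normpi lam mu K (resolvOp lam mu K ρ u) := by
          rw [normpi_eq hP u memu, normpi_eq hP _ memr]
  have hSq : Spi lam mu K u = (normpi lam mu K u)^2 := by
    rw [normpi_def', Real.sq_sqrt (Spi_nonneg hP u)]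
  set A := normpi lam mu K u with hA
  set B := normpi lam mu K (resolvOp lam mu K ρ u) with hB
  have hA0 : 0 ≤ A := normpi_nonneg u
  have hB0 : 0 ≤ B := normpi_nonneg _
  have hkey : ρ * A^2 ≤ A * B := by rw [← hSq]; linarith
  rcases eq_or_lt_of_le hA0 with hA' | hA'
  · rw [← hA']
    positivity
  · have : ρ * A ≤ B := by nlinarith
    rw [inv_mul_eq_div, le_div_iff₀ hρ]
    linarith

end Aux4
section Aux5
variable {lam mu : ℝ → ℝ} {K : ℝ}

theorem real_homog (hP : Pos lam mu K)
    (hpimu : Tendsto (fun n : ℕ => pik lam mu K n * muK mu K n ^ 2) atTop (nhds 0))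
    (ρ : ℝ) (hρ : 0 < ρ) (s : ℕ → ℝ) (hs0 : s 0 = 0)
    (hsum : Summable (fun n : ℕ => pik lam mu K (n+1) * (s (n+1))^2))
    (hrec : ∀ n : ℕ, 1 ≤ n →
      lamK lam K n * (s (n+1) - s n) = ρ * s n + muK mu K n * (s n - s (n-1))) :
    ∀ n : ℕ, s n = 0 := by
  have h1 : ∀ n : ℕ, 0 ≤ s n :=
    maxprin hP hpimu ρ hρ s hs0 hsum (fun n hn => le_of_eq (hrec n hn))
  have h2 : ∀ n : ℕ, 0 ≤ -(s n) := by
    apply maxprin hP hpimu ρ hρ (fun n => -(s n)) (by simp [hs0])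
    · apply Summable.congr hsum
      intro n; ring_nf
    · intro n hn
      have := hrec n hn
      nlinarith [this]
  intro n
  have := h1 n; have := h2 n
  linarith

theorem homog (hP : Pos lam mu K)
    (hpimu : Tendsto (fun n : ℕ => pik lam mu K n * muK mu K n ^ 2) atTop (nhds 0))
    (ρ : ℝ) (hρ : 0 < ρ) (g : ℕ → ℂ) (hg : MemL2pi lam mu K g)
    (heq : ∀ n : ℕ, 1 ≤ n → (ρ:ℂ) * g n - Ltilde lam mu K g n = 0) :
    ∀ n : ℕ, 1 ≤ n → g n = 0 := by
  have main : ∀ φ : ℂ → ℝ, (∀ z, |φ z| ≤ ‖z‖) → (∀ a b, φ (a - b) = φ a - φ b) →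
      (∀ a b, φ (a + b) = φ a + φ b) → (∀ (r : ℝ) (z : ℂ), φ ((r:ℂ) * z) = r * φ z) →
      ∀ n : ℕ, 1 ≤ n → φ (g n) = 0 := by
    intro φ hφb hφsub hφadd hφsmul
    set s : ℕ → ℝ := fun n => if n = 0 then 0 else φ (g n) with hsdef
    have hs0 : s 0 = 0 := by simp [hsdef]
    have hsn : ∀ n : ℕ, 1 ≤ n → s n = φ (g n) := by
      intro n hn; simp only [hsdef]; rw [if_neg (by omega)]
    have hsum : Summable (fun n : ℕ => pik lam mu K (n+1) * (s (n+1))^2) := by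
      apply Summable.of_nonneg_of_le (fun n => mul_nonneg (hP.ppos _).le (sq_nonneg _)) _ hg
      intro n
      apply mul_le_mul_of_nonneg_left _ (hP.ppos _).le
      rw [hsn (n+1) (by omega)]
      calc (φ (g (n+1)))^2 = |φ (g (n+1))|^2 := (sq_abs _).symm
        _ ≤ ‖g (n+1)‖^2 := by
            apply pow_le_pow_left₀ (abs_nonneg _) (hφb _)
    have hrec : ∀ n : ℕ, 1 ≤ n →
        lamK lam K n * (s (n+1) - s n) = ρ * s n + muK mu K n * (s n - s (n-1)) := by
      intro n hn
      have hz : φ 0 = 0 := by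
        have := hφsub 0 0; simp at this; linarith
      match n, hn with
      | 1, _ =>
        have h := heq 1 (by omega)
        rw [Ltilde_one] at h
        rw [show ((lamK lam K 1:ℂ)+(muK mu K 1:ℂ)) = (((lamK lam K 1 + muK mu K 1:ℝ)):ℂ) by
          push_cast; ring] at h
        have h2 := congrArg φ h
        simp only [hφsub, hφsmul, hz] at h2
        rw [hsn 1 (by omega), hsn 2 (by omega), show (1:ℕ)-1 = 0 from rfl, hs0]
        linarith [h2]
      | (m+2), _ =>
        have h := heq (m+2) (by omega)
        rw [Ltilde_succ] at h
        rw [show ((lamK lam K (m+2):ℂ)+(muK mu K (m+2):ℂ))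
            = (((lamK lam K (m+2) + muK mu K (m+2):ℝ)):ℂ) by push_cast; ring] at h
        have h2 := congrArg φ h
        simp only [hφsub, hφadd, hφsmul, hz] at h2
        rw [hsn (m+2+1) (by omega), hsn (m+2) (by omega), hsn (m+2-1) (by omega)]
        rw [show (m+2)-1 = m+1 from rfl, show (m+2)+1 = m+3 from rfl]
        linarith [h2]
    have := real_homog hP hpimu ρ hρ s hs0 hsum hrec
    intro n hn
    rw [← hsn n hn]
    exact this n
  intro n hn
  have hre := main Complex.re (fun z => Complex.abs_re_le_norm z) (fun a b => Complex.sub_re a b)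
    (fun a b => Complex.add_re a b) (fun r z => Complex.re_ofReal_mul r z) n hn
  have him := main Complex.im (fun z => Complex.abs_im_le_norm z) (fun a b => Complex.sub_im a b)
    (fun a b => Complex.add_im a b) (fun r z => by simp [Complex.mul_im]) n hn
  exact Complex.ext hre him

theorem pw_unique (hP : Pos lam mu K)
    (hpimu : Tendsto (fun n : ℕ => pik lam mu K n * muK mu K n ^ 2) atTop (nhds 0))
    (ρ : ℝ) (hρ : 0 < ρ) (f : ℕ → ℂ) (y1 y2 : ℕ → ℂ)
    (h1 : MemL2pi lam mu K y1) (h2 : MemL2pi lam mu K y2)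
    (e1 : ∀ n : ℕ, 1 ≤ n → (ρ:ℂ) * y1 n - Ltilde lam mu K y1 n = f n)
    (e2 : ∀ n : ℕ, 1 ≤ n → (ρ:ℂ) * y2 n - Ltilde lam mu K y2 n = f n) :
    ∀ n : ℕ, 1 ≤ n → y1 n = y2 n := by
  have hd : MemL2pi lam mu K (fun n => y1 n - y2 n) := MemL2pi.sub hP h1 h2
  have heq : ∀ n : ℕ, 1 ≤ n → (ρ:ℂ) * (y1 n - y2 n) - Ltilde lam mu K (fun k => y1 k - y2 k) n = 0 := by
    intro n hn
    rw [Ltilde_sub]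
    have q1 := e1 n hn
    have q2 := e2 n hn
    have e : (ρ:ℂ) * (y1 n - y2 n) - (Ltilde lam mu K y1 n - Ltilde lam mu K y2 n)
        = ((ρ:ℂ) * y1 n - Ltilde lam mu K y1 n) - ((ρ:ℂ) * y2 n - Ltilde lam mu K y2 n) := by ring
    rw [e, q1, q2, sub_self]
  have := homog hP hpimu ρ hρ _ hd heq
  intro n hn
  have := this n hn
  exact sub_eq_zero.mp this

end Aux5
section Aux6
variable {lam mu : ℝ → ℝ} {K : ℝ}

theorem Ltilde_add (u v : ℕ → ℂ) (n : ℕ) :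
    Ltilde lam mu K (fun k => u k + v k) n = Ltilde lam mu K u n + Ltilde lam mu K v n := by
  unfold Ltilde; split <;> ring

theorem Ltilde_smulC (c : ℂ) (u : ℕ → ℂ) (n : ℕ) :
    Ltilde lam mu K (fun k => c * u k) n = c * Ltilde lam mu K u n := by
  unfold Ltilde; split <;> ring

theorem resolv_add (ρ : ℝ) (u v : ℕ → ℂ) (n : ℕ) :
    resolvOp lam mu K ρ (fun k => u k + v k) n
      = resolvOp lam mu K ρ u n + resolvOp lam mu K ρ v n := by
  unfold resolvOp; rw [Ltilde_add]; ring

theorem resolv_smulC (ρ : ℝ) (c : ℂ) (u : ℕ → ℂ) (n : ℕ) :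
    resolvOp lam mu K ρ (fun k => c * u k) n = c * resolvOp lam mu K ρ u n := by
  unfold resolvOp; rw [Ltilde_smulC]; ring

theorem resolv_sub (ρ : ℝ) (u v : ℕ → ℂ) (n : ℕ) :
    resolvOp lam mu K ρ (fun k => u k - v k) n
      = resolvOp lam mu K ρ u n - resolvOp lam mu K ρ v n := by
  unfold resolvOp; rw [Ltilde_sub]; ring

theorem finSupp_add {u v : ℕ → ℂ} (hu : FinSupp u) (hv : FinSupp v) :
    FinSupp (fun k => u k + v k) := by
  obtain ⟨N, hN⟩ := hu; obtain ⟨M, hM⟩ := hv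
  exact ⟨max N M, fun n hn => by
    show u n + v n = 0
    rw [hN n (lt_of_le_of_lt (le_max_left N M) hn), hM n (lt_of_le_of_lt (le_max_right N M) hn),
      add_zero]⟩

theorem finSupp_sub {u v : ℕ → ℂ} (hu : FinSupp u) (hv : FinSupp v) :
    FinSupp (fun k => u k - v k) := by
  obtain ⟨N, hN⟩ := hu; obtain ⟨M, hM⟩ := hv
  exact ⟨max N M, fun n hn => by
    show u n - v n = 0
    rw [hN n (lt_of_le_of_lt (le_max_left N M) hn), hM n (lt_of_le_of_lt (le_max_right N M) hn),
      sub_zero]⟩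

theorem finSupp_smulC (c : ℂ) {u : ℕ → ℂ} (hu : FinSupp u) : FinSupp (fun k => c * u k) := by
  obtain ⟨N, hN⟩ := hu
  exact ⟨N, fun n hn => by show c * u n = 0; rw [hN n hn, mul_zero]⟩

theorem Jf_add (u v : ℕ → ℂ) (n : ℕ) :
    Jf lam mu K (fun k => u k + v k) n = Jf lam mu K u n + Jf lam mu K v n := by
  unfold Jf; ring

theorem Jf_sub (u v : ℕ → ℂ) (n : ℕ) :
    Jf lam mu K (fun k => u k - v k) n = Jf lam mu K u n - Jf lam mu K v n := by
  unfold Jf; ring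

theorem Jf_smulC (c : ℂ) (u : ℕ → ℂ) (n : ℕ) :
    Jf lam mu K (fun k => c * u k) n = c * Jf lam mu K u n := by
  unfold Jf; ring

/-- The range of `(ρ - L̃)` on finitely supported sequences, inside `ℓ²`. -/
def Rsub (lam mu : ℝ → ℝ) (K : ℝ) (ρ : ℝ) : Submodule ℂ (lp (fun _ : ℕ => ℂ) 2) where
  carrier := {v | ∃ u : ℕ → ℂ, FinSupp u ∧
    ∀ n, (v : ℕ → ℂ) n = Jf lam mu K (resolvOp lam mu K ρ u) n}
  add_mem' := by
    rintro a b ⟨u, hu, ha⟩ ⟨v, hv, hb⟩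
    refine ⟨fun k => u k + v k, finSupp_add hu hv, fun n => ?_⟩
    have : ((a + b : lp (fun _ : ℕ => ℂ) 2) : ℕ → ℂ) n = (a : ℕ → ℂ) n + (b : ℕ → ℂ) n := by
      rw [lp.coeFn_add]; rfl
    rw [this, ha n, hb n]
    have e : resolvOp lam mu K ρ (fun k => u k + v k)
        = fun n => resolvOp lam mu K ρ u n + resolvOp lam mu K ρ v n := funext (resolv_add ρ u v)
    rw [e]
    rw [show (fun n => resolvOp lam mu K ρ u n + resolvOp lam mu K ρ v n)
        = (fun n => (resolvOp lam mu K ρ u) n + (resolvOp lam mu K ρ v) n) from rfl]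
    rw [Jf_add]
  zero_mem' := by
    refine ⟨0, ⟨0, fun n _ => rfl⟩, fun n => ?_⟩
    have : ((0 : lp (fun _ : ℕ => ℂ) 2) : ℕ → ℂ) n = 0 := by rw [lp.coeFn_zero]; rfl
    rw [this]
    have e : resolvOp lam mu K ρ (0 : ℕ → ℂ) = fun _ => 0 := by
      funext k
      unfold resolvOp Ltilde
      simp
    rw [e]
    unfold Jf
    simp
  smul_mem' := by
    rintro c a ⟨u, hu, ha⟩
    refine ⟨fun k => c * u k, finSupp_smulC c hu, fun n => ?_⟩
    have : ((c • a : lp (fun _ : ℕ => ℂ) 2) : ℕ → ℂ) n = c * (a : ℕ → ℂ) n := by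
      rw [lp.coeFn_smul]; rfl
    rw [this, ha n]
    have e : resolvOp lam mu K ρ (fun k => c * u k)
        = fun n => c * resolvOp lam mu K ρ u n := funext (resolv_smulC ρ c u)
    rw [e, show (fun n => c * resolvOp lam mu K ρ u n)
        = (fun n => c * (resolvOp lam mu K ρ u) n) from rfl, Jf_smulC]

/-- Symmetry of `L̃` in `ℓ²(π)` against arbitrary sequences, for finitely supported `u`. -/
theorem Bsym (hP : Pos lam mu K) (u g : ℕ → ℂ) (N : ℕ) (hN : ∀ k, N < k → u k = 0) :
    ∑' n : ℕ, (pik lam mu K (n+1) : ℂ) * Ltilde lam mu K u (n+1) * g (n+1)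
      = ∑' n : ℕ, (pik lam mu K (n+1) : ℂ) * u (n+1) * Ltilde lam mu K g (n+1) := by
  have hL : ∑' n : ℕ, (pik lam mu K (n+1) : ℂ) * Ltilde lam mu K u (n+1) * g (n+1)
      = ∑ n ∈ Finset.range (N+2), (pik lam mu K (n+1) : ℂ) * Ltilde lam mu K u (n+1) * g (n+1) := by
    apply tsum_eq_sum
    intro n hn
    rw [Finset.mem_range, not_lt] at hn
    rw [Ltilde_eq_zero u N hN (n+1) (by omega)]
    simp
  have hR : ∑' n : ℕ, (pik lam mu K (n+1) : ℂ) * u (n+1) * Ltilde lam mu K g (n+1)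
      = ∑ n ∈ Finset.range (N+2), (pik lam mu K (n+1) : ℂ) * u (n+1) * Ltilde lam mu K g (n+1) := by
    apply tsum_eq_sum
    intro n hn
    rw [Finset.mem_range, not_lt] at hn
    rw [hN (n+1) (by omega)]
    simp
  rw [hL, hR, ← sub_eq_zero, ← Finset.sum_sub_distrib]
  have e : ∀ n ∈ Finset.range (N+2),
      (pik lam mu K (n+1) : ℂ) * Ltilde lam mu K u (n+1) * g (n+1)
        - (pik lam mu K (n+1) : ℂ) * u (n+1) * Ltilde lam mu K g (n+1)
      = (pik lam mu K (n+1) : ℂ)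
          * (Ltilde lam mu K u (n+1) * g (n+1) - u (n+1) * Ltilde lam mu K g (n+1)) := by
    intro n _; ring
  rw [Finset.sum_congr rfl e]
  rw [show N + 2 = (N+1) + 1 from rfl, wronsk hP u g (N+1)]
  rw [hN (N+1+2) (by omega), hN (N+1+1) (by omega)]
  ring

/-- The orthogonal complement of the range is trivial. -/
theorem Rorth (hP : Pos lam mu K)
    (hpimu : Tendsto (fun n : ℕ => pik lam mu K n * muK mu K n ^ 2) atTop (nhds 0))
    (ρ : ℝ) (hρ : 0 < ρ) : (Rsub lam mu K ρ)ᗮ = ⊥ := by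
  rw [Submodule.eq_bot_iff]
  intro x hx
  rw [Submodule.mem_orthogonal] at hx
  classical
  set g : ℕ → ℂ := fun n => if n = 0 then 0
    else (x : ℕ → ℂ) (n-1) / ((Real.sqrt (pik lam mu K n) : ℝ) : ℂ) with hgdef
  have hsq : ∀ n : ℕ, ((Real.sqrt (pik lam mu K (n+1)) : ℝ) : ℂ) ≠ 0 := by
    intro n
    simp only [ne_eq, Complex.ofReal_eq_zero]
    exact (Real.sqrt_pos.mpr (hP.ppos (n+1))).ne'
  have hJg : ∀ n : ℕ, Jf lam mu K g n = (x : ℕ → ℂ) n := by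
    intro n
    unfold Jf
    rw [hgdef]
    simp only [Nat.succ_ne_zero, if_false, Nat.add_sub_cancel]
    rw [mul_comm, div_mul_cancel₀ _ (hsq n)]
  have hg : MemL2pi lam mu K g := by
    rw [memℓp_iff hP]
    have : Jf lam mu K g = (x : ℕ → ℂ) := funext hJg
    rw [this]
    exact lp.memℓp x
  have hxg : toLp hP g hg = x := lp.ext (funext hJg)
  -- the orthogonality relations give the pointwise equation for g
  have hres : ∀ m : ℕ, 1 ≤ m → resolvOp lam mu K ρ g m = 0 := by
    intro m hm
    set δ : ℕ → ℂ := fun k => if k = m then 1 else 0 with hδdef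
    have hN : ∀ k, m < k → δ k = 0 := by
      intro n hn; simp only [hδdef]; rw [if_neg (by omega)]
    have hδfs : FinSupp δ := ⟨m, hN⟩
    have hδmem : MemL2pi lam mu K (resolvOp lam mu K ρ δ) :=
      memL2pi_of_finSupp hP _ (finSupp_resolv ρ δ hδfs)
    have hmemR : toLp hP _ hδmem ∈ Rsub lam mu K ρ := ⟨δ, hδfs, fun n => rfl⟩
    have h0 : ippi lam mu K (resolvOp lam mu K ρ δ) g = 0 := by
      rw [ippi_eq hP _ _ hδmem hg, hxg]
      exact hx _ hmemR
    have hconj : ∀ k, (starRingEnd ℂ) (resolvOp lam mu K ρ δ k) = resolvOp lam mu K ρ δ k := by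
      intro k
      unfold resolvOp
      rw [map_sub, map_mul, ← Ltilde_conj]
      have hδc : (fun j => (starRingEnd ℂ) (δ j)) = δ := by
        funext j; by_cases h : j = m <;> simp [hδdef, h]
      have hδk : (starRingEnd ℂ) (δ k) = δ k := congrFun hδc k
      rw [hδc, hδk, Complex.conj_ofReal]
    have h1 : ∑' n : ℕ, (pik lam mu K (n+1) : ℂ) * resolvOp lam mu K ρ δ (n+1) * g (n+1) = 0 := by
      rw [← h0]
      unfold ippi
      apply tsum_congr
      intro n
      rw [hconj]
    have hrv : ∀ k, m + 1 < k → resolvOp lam mu K ρ δ k = 0 := by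
      intro k hk
      obtain ⟨M, hM⟩ := finSupp_resolv (lam := lam) (mu := mu) (K := K) ρ δ ⟨m, hN⟩
      unfold resolvOp
      rw [hN k (by omega), Ltilde_eq_zero δ m hN k (by omega)]
      simp
    have hsum1 : ∑ n ∈ Finset.range (m+2),
        (pik lam mu K (n+1) : ℂ) * resolvOp lam mu K ρ δ (n+1) * g (n+1) = 0 := by
      rw [← tsum_eq_sum (L := SummationFilter.unconditional ℕ) (f := fun n => (pik lam mu K (n+1) : ℂ) * resolvOp lam mu K ρ δ (n+1) * g (n+1)) (fun n hn => ?_)]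
      · exact h1
      · rw [Finset.mem_range, not_lt] at hn
        rw [hrv (n+1) (by omega)]
        ring
    have h4 : (ρ:ℂ) * (∑ n ∈ Finset.range (m+2), (pik lam mu K (n+1) : ℂ) * δ (n+1) * g (n+1))
        - ∑ n ∈ Finset.range (m+2), (pik lam mu K (n+1) : ℂ) * Ltilde lam mu K δ (n+1) * g (n+1)
        = 0 := by
      rw [Finset.mul_sum, ← Finset.sum_sub_distrib, ← hsum1]
      apply Finset.sum_congr rfl
      intro n _
      unfold resolvOp
      ring
    have hBfin : ∑ n ∈ Finset.range (m+2), (pik lam mu K (n+1) : ℂ) * Ltilde lam mu K δ (n+1) * g (n+1)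
        = ∑ n ∈ Finset.range (m+2), (pik lam mu K (n+1) : ℂ) * δ (n+1) * Ltilde lam mu K g (n+1) := by
      have hv1 : ∀ n ∉ Finset.range (m+2),
          (pik lam mu K (n+1) : ℂ) * Ltilde lam mu K δ (n+1) * g (n+1) = 0 := by
        intro n hn
        rw [Finset.mem_range, not_lt] at hn
        rw [Ltilde_eq_zero δ m hN (n+1) (by omega)]
        ring
      have hv2 : ∀ n ∉ Finset.range (m+2),
          (pik lam mu K (n+1) : ℂ) * δ (n+1) * Ltilde lam mu K g (n+1) = 0 := by
        intro n hn
        rw [Finset.mem_range, not_lt] at hn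
        rw [hN (n+1) (by omega)]
        ring
      calc ∑ n ∈ Finset.range (m+2), (pik lam mu K (n+1) : ℂ) * Ltilde lam mu K δ (n+1) * g (n+1)
          = ∑' n : ℕ, (pik lam mu K (n+1) : ℂ) * Ltilde lam mu K δ (n+1) * g (n+1) :=
            (tsum_eq_sum hv1).symm
        _ = ∑' n : ℕ, (pik lam mu K (n+1) : ℂ) * δ (n+1) * Ltilde lam mu K g (n+1) :=
            Bsym hP δ g m hN
        _ = ∑ n ∈ Finset.range (m+2), (pik lam mu K (n+1) : ℂ) * δ (n+1) * Ltilde lam mu K g (n+1) :=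
            tsum_eq_sum hv2
    have hsingle : ∀ v : ℕ → ℂ, ∑ n ∈ Finset.range (m+2), (pik lam mu K (n+1) : ℂ) * δ (n+1) * v (n+1)
        = (pik lam mu K m : ℂ) * v m := by
      intro v
      rw [Finset.sum_eq_single_of_mem (m-1) (Finset.mem_range.mpr (by omega))]
      · simp only [hδdef]
        rw [show m - 1 + 1 = m by omega, if_pos rfl, mul_one]
      · intro b _ hb
        simp only [hδdef]
        rw [if_neg (by omega)]
        ring
    rw [hBfin, hsingle, hsingle] at h4
    have hπ : (pik lam mu K m : ℂ) ≠ 0 := by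
      simp only [ne_eq, Complex.ofReal_eq_zero]
      exact (hP.ppos m).ne'
    have : (pik lam mu K m : ℂ) * ((ρ:ℂ) * g m - Ltilde lam mu K g m) = 0 := by
      rw [← h4]; ring
    have h5 := (mul_eq_zero.mp this).resolve_left hπ
    unfold resolvOp
    exact h5
  have hg0 : ∀ n : ℕ, 1 ≤ n → g n = 0 :=
    homog hP hpimu ρ hρ g hg (fun n hn => hres n hn)
  apply lp.ext
  funext n
  have : (x : ℕ → ℂ) n = Jf lam mu K g n := (hJg n).symm
  rw [this]
  unfold Jf
  rw [hg0 (n+1) (by omega), mul_zero]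
  rfl

end Aux6
section Aux7
variable {lam mu : ℝ → ℝ} {K : ℝ}

theorem coordconv (hP : Pos lam mu K) {z : ℕ → ℕ → ℂ} {u : ℕ → ℂ}
    (hmem : ∀ k, MemL2pi lam mu K (fun n => z k n - u n))
    (h : Tendsto (fun k => normpi lam mu K (fun n => z k n - u n)) atTop (nhds 0))
    (m : ℕ) (hm : 1 ≤ m) : Tendsto (fun k => z k m) atTop (nhds (u m)) := by
  rw [tendsto_iff_norm_sub_tendsto_zero]
  have hπ : 0 < Real.sqrt (pik lam mu K m) := Real.sqrt_pos.mpr (hP.ppos m)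
  apply squeeze_zero (g := fun k => (Real.sqrt (pik lam mu K m))⁻¹
      * normpi lam mu K (fun n => z k n - u n)) (fun k => norm_nonneg _)
  · intro k
    have hc := coord_le hP _ (hmem k) (m-1)
    rw [show m - 1 + 1 = m by omega] at hc
    rw [inv_mul_eq_div, le_div_iff₀ hπ, mul_comm]
    exact hc
  · have := h.const_mul ((Real.sqrt (pik lam mu K m))⁻¹)
    simpa using this

theorem graph_w (hP : Pos lam mu K) (y w : ℕ → ℂ) (hG : LGraph lam mu K y w) :
    ∀ n : ℕ, 1 ≤ n → w n = Ltilde lam mu K y n := by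
  obtain ⟨hy, hw, us, hfs, h1, h2⟩ := hG
  have hcoord : ∀ m : ℕ, 1 ≤ m → Tendsto (fun k => us k m) atTop (nhds (y m)) := by
    intro m hm
    exact coordconv hP (fun k => MemL2pi.sub hP (memL2pi_of_finSupp hP _ (hfs k)) hy) h1 m hm
  have hLcoord : ∀ m : ℕ, 1 ≤ m →
      Tendsto (fun k => Ltilde lam mu K (us k) m) atTop (nhds (w m)) := by
    intro m hm
    exact coordconv hP
      (fun k => MemL2pi.sub hP (memL2pi_of_finSupp hP _ (finSupp_Ltilde _ (hfs k))) hw) h2 m hm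
  intro n hn
  have hLlim : Tendsto (fun k => Ltilde lam mu K (us k) n) atTop (nhds (Ltilde lam mu K y n)) := by
    unfold Ltilde
    apply Tendsto.sub
    · apply Tendsto.add
      · exact (hcoord (n+1) (by omega)).const_mul _
      · by_cases h2n : 2 ≤ n
        · rw [if_pos h2n]
          have := (hcoord (n-1) (by omega)).const_mul ((muK mu K n : ℂ))
          apply this.congr'
          filter_upwards with k
          rw [if_pos h2n]
        · rw [if_neg h2n]
          apply tendsto_const_nhds.congr'
          filter_upwards with k
          rw [if_neg h2n]
    · exact (hcoord n hn).const_mul _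
  exact tendsto_nhds_unique (hLcoord n hn) hLlim

end Aux7
/-- For every `f ∈ ℓ²(π)` and `ρ > 0`, the resolvent equation
`(ρ - L) y = f` has a unique solution `y` in the domain of `L`, with
`‖y‖_π ≤ ρ⁻¹ ‖f‖_π`, and `y ≥ 0` whenever `f ≥ 0`. -/
theorem stmt_2 (lam mu : ℝ → ℝ) (xs : ℝ) (hSA : SA lam mu xs) (K : ℝ) (hK : 1 < K)
    (hpimu : Tendsto (fun n : ℕ => pik lam mu K n * muK mu K n ^ 2) atTop (nhds 0))
    (f : ℕ → ℂ) (hf : MemL2pi lam mu K f) (ρ : ℝ) (hρ : 0 < ρ) :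
    ∃ y w : ℕ → ℂ, LGraph lam mu K y w ∧
      (∀ n : ℕ, 1 ≤ n → (ρ : ℂ) * y n - w n = f n) ∧
      (∀ y' w' : ℕ → ℂ, LGraph lam mu K y' w' →
        (∀ n : ℕ, 1 ≤ n → (ρ : ℂ) * y' n - w' n = f n) →
        ∀ n : ℕ, 1 ≤ n → y' n = y n) ∧
      normpi lam mu K y ≤ ρ⁻¹ * normpi lam mu K f ∧
      ((∀ n : ℕ, 1 ≤ n → (f n).im = 0 ∧ 0 ≤ (f n).re) →
        ∀ n : ℕ, 1 ≤ n → (y n).im = 0 ∧ 0 ≤ (y n).re) := by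
  classical
  have hP : Pos lam mu K := pos_of hK hSA.lam_pos hSA.mu_pos
  set F : lp (fun _ : ℕ => ℂ) 2 := toLp hP f hf with hF
  -- density of the range
  have htop : (Rsub lam mu K ρ).topologicalClosure = ⊤ :=
    Submodule.topologicalClosure_eq_top_iff.mpr (Rorth hP hpimu ρ hρ)
  have hFc : F ∈ closure ((Rsub lam mu K ρ : Set (lp (fun _ : ℕ => ℂ) 2))) := by
    have h1 : F ∈ (Rsub lam mu K ρ).topologicalClosure := by rw [htop]; trivial
    rw [← Submodule.topologicalClosure_coe]
    exact h1
  obtain ⟨v, hvR, hvF⟩ := mem_closure_iff_seq_limit.mp hFc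
  have hus : ∀ k, ∃ u : ℕ → ℂ, FinSupp u ∧
      ∀ n, ((v k : ℕ → ℂ)) n = Jf lam mu K (resolvOp lam mu K ρ u) n := fun k => hvR k
  choose us husFS husCo using hus
  have memus : ∀ k, MemL2pi lam mu K (us k) := fun k => memL2pi_of_finSupp hP _ (husFS k)
  set a : ℕ → lp (fun _ : ℕ => ℂ) 2 := fun k => toLp hP (us k) (memus k) with ha
  have memrus : ∀ k, MemL2pi lam mu K (resolvOp lam mu K ρ (us k)) :=
    fun k => memL2pi_of_finSupp hP _ (finSupp_resolv ρ (us k) (husFS k))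
  have hvk : ∀ k, v k = toLp hP (resolvOp lam mu K ρ (us k)) (memrus k) :=
    fun k => lp.ext (funext (husCo k))
  -- Cauchy estimates
  have hab : ∀ j k, ‖a j - a k‖ ≤ ρ⁻¹ * ‖v j - v k‖ := by
    intro j k
    set d : ℕ → ℂ := fun n => us j n - us k n with hd
    have hdfs : FinSupp d := finSupp_sub (husFS j) (husFS k)
    have memd : MemL2pi lam mu K d := memL2pi_of_finSupp hP _ hdfs
    have memrd : MemL2pi lam mu K (resolvOp lam mu K ρ d) :=
      memL2pi_of_finSupp hP _ (finSupp_resolv ρ d hdfs)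
    have e1 : a j - a k = toLp hP d memd := by
      apply lp.ext
      rw [lp.coeFn_sub]
      funext n
      show (a j : ℕ → ℂ) n - (a k : ℕ → ℂ) n = Jf lam mu K d n
      rw [toLp_coe, toLp_coe, ← Jf_sub]
    have e2 : v j - v k = toLp hP (resolvOp lam mu K ρ d) memrd := by
      apply lp.ext
      rw [lp.coeFn_sub]
      funext n
      show (v j : ℕ → ℂ) n - (v k : ℕ → ℂ) n = Jf lam mu K (resolvOp lam mu K ρ d) n
      rw [husCo j n, husCo k n, ← Jf_sub]
      congr 1
      funext q
      exact (resolv_sub ρ (us j) (us k) q).symm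
    rw [e1, e2, ← normpi_eq hP d memd, ← normpi_eq hP _ memrd]
    exact diss hP ρ hρ d hdfs
  have hca : CauchySeq a := by
    rw [Metric.cauchySeq_iff]
    intro ε hε
    obtain ⟨N, hN⟩ := Metric.cauchySeq_iff.mp hvF.cauchySeq (ρ * ε) (mul_pos hρ hε)
    refine ⟨N, fun p hp q hq => ?_⟩
    have h1 := hab p q
    rw [dist_eq_norm] at *
    calc ‖a p - a q‖ ≤ ρ⁻¹ * ‖v p - v q‖ := h1
      _ < ρ⁻¹ * (ρ * ε) := by
          apply mul_lt_mul_of_pos_left _ (inv_pos.mpr hρ)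
          rw [← dist_eq_norm]
          exact hN p hp q hq
      _ = ε := by field_simp
  obtain ⟨Y, hY⟩ := cauchySeq_tendsto_of_complete hca
  -- define y from Y
  set y : ℕ → ℂ := fun n => if n = 0 then 0
    else (Y : ℕ → ℂ) (n-1) / ((Real.sqrt (pik lam mu K n) : ℝ) : ℂ) with hydef
  have hsq : ∀ n : ℕ, ((Real.sqrt (pik lam mu K (n+1)) : ℝ) : ℂ) ≠ 0 := by
    intro n
    simp only [ne_eq, Complex.ofReal_eq_zero]
    exact (Real.sqrt_pos.mpr (hP.ppos (n+1))).ne'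
  have hJy : ∀ n : ℕ, Jf lam mu K y n = (Y : ℕ → ℂ) n := by
    intro n
    unfold Jf
    rw [hydef]
    simp only [Nat.succ_ne_zero, if_false, Nat.add_sub_cancel]
    rw [mul_comm, div_mul_cancel₀ _ (hsq n)]
  have hy : MemL2pi lam mu K y := by
    rw [memℓp_iff hP]
    rw [funext hJy]
    exact lp.memℓp Y
  have hYy : toLp hP y hy = Y := lp.ext (funext hJy)
  -- define w
  set w : ℕ → ℂ := fun n => (ρ:ℂ) * y n - f n with hwdef
  have hJw : ∀ n : ℕ, Jf lam mu K w n = ((ρ:ℂ) • Y - F : lp (fun _ : ℕ => ℂ) 2).1 n := by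
    intro n
    have e : ((ρ:ℂ) • Y - F : lp (fun _ : ℕ => ℂ) 2).1 n = (ρ:ℂ) * (Y : ℕ → ℂ) n - (F : ℕ → ℂ) n := by
      rw [lp.coeFn_sub, lp.coeFn_smul]
      rfl
    rw [e, ← hJy n]
    show Jf lam mu K w n = (ρ:ℂ) * Jf lam mu K y n - Jf lam mu K f n
    unfold Jf
    rw [hwdef]
    ring
  have hw : MemL2pi lam mu K w := by
    rw [memℓp_iff hP]
    rw [funext hJw]
    exact lp.memℓp _
  have hWw : toLp hP w hw = (ρ:ℂ) • Y - F := lp.ext (funext hJw)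
  -- convergence of us to y in normpi
  have hT1 : Tendsto (fun k => normpi lam mu K (fun n => us k n - y n)) atTop (nhds 0) := by
    have he : ∀ k, normpi lam mu K (fun n => us k n - y n) = ‖a k - Y‖ := by
      intro k
      have memd : MemL2pi lam mu K (fun n => us k n - y n) := MemL2pi.sub hP (memus k) hy
      rw [normpi_eq hP _ memd]
      congr 1
      apply lp.ext
      rw [lp.coeFn_sub]
      funext n
      show Jf lam mu K (fun n => us k n - y n) n = (a k : ℕ → ℂ) n - (Y : ℕ → ℂ) n
      rw [Jf_sub, toLp_coe, hJy]
    rw [funext he]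
    exact tendsto_iff_norm_sub_tendsto_zero.mp hY
  -- convergence of Ltilde us to w in normpi
  have hbk : ∀ k, toLp hP (Ltilde lam mu K (us k))
      (memL2pi_of_finSupp hP _ (finSupp_Ltilde _ (husFS k))) = (ρ:ℂ) • a k - v k := by
    intro k
    apply lp.ext
    rw [lp.coeFn_sub, lp.coeFn_smul]
    funext n
    show Jf lam mu K (Ltilde lam mu K (us k)) n = (ρ:ℂ) * (a k : ℕ → ℂ) n - (v k : ℕ → ℂ) n
    rw [toLp_coe, husCo k n]
    unfold Jf resolvOp
    ring
  have hT2 : Tendsto (fun k => normpi lam mu K (fun n => Ltilde lam mu K (us k) n - w n))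
      atTop (nhds 0) := by
    have hblim : Tendsto (fun k => (ρ:ℂ) • a k - v k) atTop (nhds ((ρ:ℂ) • Y - F)) :=
      (hY.const_smul ((ρ:ℂ))).sub hvF
    have he : ∀ k, normpi lam mu K (fun n => Ltilde lam mu K (us k) n - w n)
        = ‖((ρ:ℂ) • a k - v k) - ((ρ:ℂ) • Y - F)‖ := by
      intro k
      have memd : MemL2pi lam mu K (fun n => Ltilde lam mu K (us k) n - w n) :=
        MemL2pi.sub hP (memL2pi_of_finSupp hP _ (finSupp_Ltilde _ (husFS k))) hw
      rw [normpi_eq hP _ memd]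
      congr 1
      apply lp.ext
      rw [lp.coeFn_sub]
      funext n
      show Jf lam mu K (fun n => Ltilde lam mu K (us k) n - w n) n
        = ((ρ:ℂ) • a k - v k : lp (fun _ : ℕ => ℂ) 2).1 n - ((ρ:ℂ) • Y - F : lp (fun _ : ℕ => ℂ) 2).1 n
      rw [Jf_sub, ← hbk k, ← hWw]
      rfl
    rw [funext he]
    exact tendsto_iff_norm_sub_tendsto_zero.mp hblim
  have hGraph : LGraph lam mu K y w :=
    ⟨hy, hw, us, (fun k => husFS k), hT1, hT2⟩
  -- the equation
  have heqn : ∀ n : ℕ, 1 ≤ n → (ρ : ℂ) * y n - w n = f n := by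
    intro n _
    rw [hwdef]
    ring
  -- pointwise resolvent equation for y
  have hweq : ∀ n : ℕ, 1 ≤ n → w n = Ltilde lam mu K y n := graph_w hP y w hGraph
  have hyeq : ∀ n : ℕ, 1 ≤ n → (ρ:ℂ) * y n - Ltilde lam mu K y n = f n := by
    intro n hn
    rw [← hweq n hn]
    exact heqn n hn
  refine ⟨y, w, hGraph, heqn, ?_, ?_, ?_⟩
  · -- uniqueness
    intro y' w' hG' heq' n hn
    have hy' : MemL2pi lam mu K y' := hG'.1
    have hw'eq : ∀ n : ℕ, 1 ≤ n → w' n = Ltilde lam mu K y' n := graph_w hP y' w' hG'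
    have hy'eq : ∀ n : ℕ, 1 ≤ n → (ρ:ℂ) * y' n - Ltilde lam mu K y' n = f n := by
      intro n hn
      rw [← hw'eq n hn]
      exact heq' n hn
    exact pw_unique hP hpimu ρ hρ f y' y hy' hy hy'eq hyeq n hn
  · -- norm bound
    have hk : ∀ k, ‖a k‖ ≤ ρ⁻¹ * ‖v k‖ := by
      intro k
      rw [← normpi_eq hP _ (memus k), hvk k, ← normpi_eq hP _ (memrus k)]
      exact diss hP ρ hρ (us k) (husFS k)
    have h1 : Tendsto (fun k => ‖a k‖) atTop (nhds ‖Y‖) := hY.norm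
    have h2 : Tendsto (fun k => ρ⁻¹ * ‖v k‖) atTop (nhds (ρ⁻¹ * ‖F‖)) := hvF.norm.const_mul _
    have := le_of_tendsto_of_tendsto h1 h2 (Eventually.of_forall hk)
    rw [normpi_eq hP y hy, hYy, normpi_eq hP f hf]
    exact this
  · -- positivity
    intro hfpos
    have hconjy : ∀ n : ℕ, 1 ≤ n → (starRingEnd ℂ) (y n) = y n := by
      have hmemc : MemL2pi lam mu K (fun n => (starRingEnd ℂ) (y n)) := MemL2pi.conj hy
      have hce : ∀ n : ℕ, 1 ≤ n →
          (ρ:ℂ) * (starRingEnd ℂ) (y n) - Ltilde lam mu K (fun k => (starRingEnd ℂ) (y k)) n = f n := by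
        intro n hn
        rw [Ltilde_conj]
        have : (ρ:ℂ) * (starRingEnd ℂ) (y n) = (starRingEnd ℂ) ((ρ:ℂ) * y n) := by
          rw [map_mul, Complex.conj_ofReal]
        rw [this, ← map_sub, hyeq n hn]
        exact Complex.conj_eq_iff_im.mpr (hfpos n hn).1
      exact pw_unique hP hpimu ρ hρ f _ y hmemc hy hce hyeq
    have him : ∀ n : ℕ, 1 ≤ n → (y n).im = 0 :=
      fun n hn => Complex.conj_eq_iff_im.mp (hconjy n hn)
    -- real part nonnegativity via the maximum principle
    set r : ℕ → ℝ := fun n => if n = 0 then 0 else (y n).re with hrdef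
    have hr0 : r 0 = 0 := by simp [hrdef]
    have hrn : ∀ n : ℕ, 1 ≤ n → r n = (y n).re := by
      intro n hn; simp only [hrdef]; rw [if_neg (by omega)]
    have hrsum : Summable (fun n : ℕ => pik lam mu K (n+1) * (r (n+1))^2) := by
      apply Summable.of_nonneg_of_le (fun n => mul_nonneg (hP.ppos _).le (sq_nonneg _)) _ hy
      intro n
      apply mul_le_mul_of_nonneg_left _ (hP.ppos _).le
      rw [hrn (n+1) (by omega), normsq_eq]
      nlinarith [sq_nonneg ((y (n+1)).im)]
    have hrrec : ∀ n : ℕ, 1 ≤ n →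
        lamK lam K n * (r (n+1) - r n) ≤ ρ * r n + muK mu K n * (r n - r (n-1)) := by
      intro n hn
      match n, hn with
      | 1, _ =>
        have h := hyeq 1 (by omega)
        rw [Ltilde_one] at h
        rw [show ((lamK lam K 1:ℂ)+(muK mu K 1:ℂ)) = (((lamK lam K 1 + muK mu K 1:ℝ)):ℂ) by
          push_cast; ring] at h
        have h2 := congrArg Complex.re h
        simp only [Complex.sub_re, Complex.re_ofReal_mul] at h2
        have hf1 := (hfpos 1 (by omega)).2
        rw [hrn 1 (by omega), hrn 2 (by omega), show (1:ℕ)-1 = 0 from rfl, hr0]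
        linarith [h2, hf1]
      | (m+2), _ =>
        have h := hyeq (m+2) (by omega)
        rw [Ltilde_succ] at h
        rw [show ((lamK lam K (m+2):ℂ)+(muK mu K (m+2):ℂ))
            = (((lamK lam K (m+2) + muK mu K (m+2):ℝ)):ℂ) by push_cast; ring] at h
        have h2 := congrArg Complex.re h
        simp only [Complex.sub_re, Complex.add_re, Complex.re_ofReal_mul] at h2
        have hfm := (hfpos (m+2) (by omega)).2
        rw [hrn (m+2+1) (by omega), hrn (m+2) (by omega), hrn (m+2-1) (by omega)]
        rw [show (m+2)-1 = m+1 from rfl, show (m+2)+1 = m+3 from rfl]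
        linarith [h2, hfm]
    have hrpos := maxprin hP hpimu ρ hρ r hr0 hrsum hrrec
    intro n hn
    refine ⟨him n hn, ?_⟩
    have := hrpos n
    rw [hrn n hn] at this
    exact this
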